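/- Let S be an epigroup and x ∈ S. If x² = x^p · x̄^q for integers p > q ≥ 1, then x² = x^(p−q) · x^ω = (x̄̄)^(p−q), and in particular x² is a group element of S. -/
import Mathlib


/-- `spow x n = x ^ (n + 1)`: positive powers in a semigroup. -/
def spow {S : Type*} [Semigroup S] (x : S) : ℕ → S
  | 0 => x
  | n + 1 => spow x n * x

/-- `x` lies in a subgroup of `S` whose identity element is `e`. -/
def IsInSubgroupWithUnit {S : Type*} [Semigroup S] (e x : S) : Prop :=
  e * e = e ∧ x * e = x ∧ e * x = x ∧
    ∃ y : S, x * y = e ∧ y * x = e ∧ e * y = y ∧ y * e = y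

/-- `x` is a group element: it lies in some subgroup of `S`. -/
def IsGroupElement {S : Type*} [Semigroup S] (x : S) : Prop :=
  ∃ e : S, IsInSubgroupWithUnit e x

/-- An epigroup: a semigroup equipped with the pseudoinversion operation.
`pinv x` is the pseudoinverse of `x`; the axioms are Shevrin's characterization:
`x x̄ = x̄ x`, `x̄ x x̄ = x̄`, and `x^ω = x x̄` absorbs some power of `x`
(equivalently, some power of `x` lies in a subgroup with unit `x x̄`). -/
class Epigroup (S : Type*) extends Semigroup S where
  pinv : S → S
  mul_pinv_comm : ∀ x : S, x * pinv x = pinv x * x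
  pinv_mul_pinv : ∀ x : S, pinv x * x * pinv x = pinv x
  pow_absorb : ∀ x : S, ∃ n : ℕ, spow x n * (x * pinv x) = spow x n

open Epigroup

/-- `npowMul x p y = x ^ p * y`, where `x ^ 0 * y` is interpreted as `y`. -/
def npowMul {S : Type*} [Semigroup S] (x : S) : ℕ → S → S
  | 0, y => y
  | p + 1, y => x * npowMul x p y

/-- `mulNpow y x p = y * x ^ p`, where `y * x ^ 0` is interpreted as `y`. -/
def mulNpow {S : Type*} [Semigroup S] (y x : S) : ℕ → S
  | 0 => y
  | p + 1 => mulNpow y x p * x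

section Aux

variable {S : Type*}

lemma spow_succ [Semigroup S] (x : S) (n : ℕ) : spow x (n + 1) = spow x n * x := rfl

lemma spow_comm_of_comm [Semigroup S] {y z : S} (h : y * z = z * y) (n : ℕ) :
    spow y n * z = z * spow y n := by
  induction n with
  | zero => exact h
  | succ n ih =>
    show (spow y n * y) * z = _
    rw [mul_assoc, h, ← mul_assoc, ih, mul_assoc, ← spow_succ]

lemma spow_absorb_right [Semigroup S] {y e : S} (h : y * e = y) (n : ℕ) :
    spow y n * e = spow y n := by
  induction n with
  | zero => exact h
  | succ n _ =>
    show (spow y n * y) * e = _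
    rw [mul_assoc, h, ← spow_succ]

lemma spow_absorb_left [Semigroup S] {y e : S} (h : e * y = y) (n : ℕ) :
    e * spow y n = spow y n := by
  induction n with
  | zero => exact h
  | succ n ih =>
    show e * (spow y n * y) = _
    rw [← mul_assoc, ih, ← spow_succ]

lemma mul_spow [Semigroup S] (x : S) (n : ℕ) : x * spow x n = spow x n * x :=
  (spow_comm_of_comm rfl n).symm

lemma spow_add [Semigroup S] (x : S) (m n : ℕ) :
    spow x m * spow x n = spow x (m + n + 1) := by
  induction n with
  | zero => rfl
  | succ n ih =>
    rw [spow_succ, ← mul_assoc, ih]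
    rfl

lemma npowMul_eq [Semigroup S] (x : S) (n : ℕ) (y : S) :
    npowMul x (n + 1) y = spow x n * y := by
  induction n with
  | zero => rfl
  | succ n ih =>
    show x * npowMul x (n + 1) y = _
    rw [ih, ← mul_assoc, mul_spow]
    rfl

variable [Epigroup S] (x : S)

lemma w_idem : (x * pinv x) * (x * pinv x) = x * pinv x := by
  rw [mul_assoc, ← mul_assoc (pinv x), pinv_mul_pinv]

lemma x_w_comm : x * (x * pinv x) = (x * pinv x) * x := by
  conv_lhs => rw [mul_pinv_comm]
  rw [← mul_assoc]

lemma w_a : (x * pinv x) * pinv x = pinv x := by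
  rw [mul_pinv_comm, pinv_mul_pinv]

lemma a_w : pinv x * (x * pinv x) = pinv x := by
  rw [← mul_assoc, pinv_mul_pinv]

lemma w_spow_x (n : ℕ) : (x * pinv x) * spow x n = spow x n * (x * pinv x) :=
  (spow_comm_of_comm (x_w_comm x) n).symm

lemma spow_a_w (n : ℕ) : spow (pinv x) n * (x * pinv x) = spow (pinv x) n :=
  spow_absorb_right (a_w x) n

lemma w_spow_a (n : ℕ) : (x * pinv x) * spow (pinv x) n = spow (pinv x) n :=
  spow_absorb_left (w_a x) n

lemma x_spow_a_comm (n : ℕ) : x * spow (pinv x) n = spow (pinv x) n * x :=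
  (spow_comm_of_comm (mul_pinv_comm x).symm n).symm

lemma spow_mul_spow_pinv (n : ℕ) : spow x n * spow (pinv x) n = x * pinv x := by
  induction n with
  | zero => rfl
  | succ n ih =>
    calc spow x (n+1) * spow (pinv x) (n+1)
        = ((spow x n * x) * spow (pinv x) n) * pinv x := by rw [spow_succ, spow_succ, ← mul_assoc]
      _ = (spow x n * (x * spow (pinv x) n)) * pinv x := by rw [mul_assoc (spow x n)]
      _ = (spow x n * (spow (pinv x) n * x)) * pinv x := by rw [x_spow_a_comm]
      _ = ((spow x n * spow (pinv x) n) * x) * pinv x := by rw [← mul_assoc (spow x n)]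
      _ = (spow x n * spow (pinv x) n) * (x * pinv x) := by rw [mul_assoc]
      _ = (x * pinv x) * (x * pinv x) := by rw [ih]
      _ = x * pinv x := w_idem x

lemma spow_pinv_mul_spow (n : ℕ) : spow (pinv x) n * spow x n = x * pinv x := by
  induction n with
  | zero => exact (mul_pinv_comm x).symm
  | succ n ih =>
    calc spow (pinv x) (n+1) * spow x (n+1)
        = ((spow (pinv x) n * pinv x) * spow x n) * x := by
          rw [spow_succ, spow_succ, ← mul_assoc]
      _ = (spow (pinv x) n * (pinv x * spow x n)) * x := by rw [mul_assoc (spow (pinv x) n)]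
      _ = (spow (pinv x) n * (spow x n * pinv x)) * x := by
          rw [spow_comm_of_comm (mul_pinv_comm x) n]
      _ = ((spow (pinv x) n * spow x n) * pinv x) * x := by rw [← mul_assoc (spow (pinv x) n)]
      _ = (spow (pinv x) n * spow x n) * (pinv x * x) := by rw [mul_assoc]
      _ = (x * pinv x) * (pinv x * x) := by rw [ih]
      _ = (x * pinv x) * (x * pinv x) := by rw [← mul_pinv_comm]
      _ = x * pinv x := w_idem x

lemma subgroup_spow_w (n : ℕ) :
    IsInSubgroupWithUnit (x * pinv x) (spow x n * (x * pinv x)) := by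
  refine ⟨w_idem x, ?_, ?_, spow (pinv x) n, ?_, ?_, ?_, ?_⟩
  · rw [mul_assoc, w_idem]
  · rw [← mul_assoc, w_spow_x, mul_assoc, w_idem]
  · rw [mul_assoc, w_spow_a, spow_mul_spow_pinv]
  · rw [← mul_assoc, spow_pinv_mul_spow, w_idem]
  · exact w_spow_a x n
  · exact spow_a_w x n

lemma subgroup_spow_a (n : ℕ) :
    IsInSubgroupWithUnit (x * pinv x) (spow (pinv x) n) := by
  refine ⟨w_idem x, spow_a_w x n, w_spow_a x n, spow x n * (x * pinv x), ?_, ?_, ?_, ?_⟩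
  · rw [← mul_assoc, spow_pinv_mul_spow, w_idem]
  · rw [mul_assoc, w_spow_a, spow_mul_spow_pinv]
  · rw [← mul_assoc, w_spow_x, mul_assoc, w_idem]
  · rw [mul_assoc, w_idem]

lemma unit_unique {e f g : S} (he : IsInSubgroupWithUnit e g)
    (hf : IsInSubgroupWithUnit f g) : e = f := by
  obtain ⟨-, -, heg, y, -, hyg, -, -⟩ := he
  obtain ⟨-, hgf, -, z, hgz, -, -, -⟩ := hf
  have h1 : e = e * f :=
    calc e = y * g := hyg.symm
      _ = y * (g * f) := by rw [hgf]
      _ = (y * g) * f := (mul_assoc _ _ _).symm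
      _ = e * f := by rw [hyg]
  have h2 : f = e * f :=
    calc f = g * z := hgz.symm
      _ = (e * g) * z := by rw [heg]
      _ = e * (g * z) := mul_assoc _ _ _
      _ = e * f := by rw [hgz]
  exact h1.trans h2.symm

lemma w_mul_xw : (x * pinv x) * (x * (x * pinv x)) = x * (x * pinv x) := by
  rw [← mul_assoc, ← x_w_comm, mul_assoc, w_idem]

lemma pinv_pinv_eq : pinv (pinv x) = x * (x * pinv x) := by
  obtain ⟨m, hm⟩ := pow_absorb (pinv x)
  have h1 : IsInSubgroupWithUnit (pinv x * pinv (pinv x)) (spow (pinv x) m) := by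
    have := subgroup_spow_w (pinv x) m
    rwa [hm] at this
  have h2 : IsInSubgroupWithUnit (x * pinv x) (spow (pinv x) m) := subgroup_spow_a x m
  have hw : pinv x * pinv (pinv x) = x * pinv x := unit_unique h1 h2
  have hb : pinv (pinv x) * (pinv x * pinv (pinv x)) = pinv (pinv x) := by
    rw [← mul_assoc]; exact pinv_mul_pinv (pinv x)
  have hba : pinv (pinv x) * pinv x = x * pinv x := by
    rw [← mul_pinv_comm]; exact hw
  calc pinv (pinv x)
      = pinv (pinv x) * (pinv x * pinv (pinv x)) := hb.symm
    _ = pinv (pinv x) * (x * pinv x) := by rw [hw]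
    _ = pinv (pinv x) * (pinv x * (x * (x * pinv x))) := by
        rw [← mul_assoc (pinv x), ← mul_pinv_comm, w_idem]
    _ = (pinv (pinv x) * pinv x) * (x * (x * pinv x)) := (mul_assoc _ _ _).symm
    _ = (x * pinv x) * (x * (x * pinv x)) := by rw [hba]
    _ = x * (x * pinv x) := w_mul_xw x

lemma spow_xw (n : ℕ) :
    spow (x * (x * pinv x)) n = spow x n * (x * pinv x) := by
  induction n with
  | zero => rfl
  | succ n ih =>
    calc spow (x * (x * pinv x)) (n + 1)
        = (spow x n * (x * pinv x)) * (x * (x * pinv x)) := by rw [spow_succ, ih]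
      _ = spow x n * ((x * pinv x) * (x * (x * pinv x))) := mul_assoc _ _ _
      _ = spow x n * (x * (x * pinv x)) := by rw [w_mul_xw]
      _ = (spow x n * x) * (x * pinv x) := (mul_assoc _ _ _).symm
      _ = spow x (n + 1) * (x * pinv x) := rfl

end Aux

/-- If `x² = x^p·x̄^q` with `p > q ≥ 1`, then `x² = x^(p-q)·x^ω = (x̄̄)^(p-q)` and `x²`
is a group element. -/
theorem sq_eq_pow_omega {S : Type*} [Epigroup S] (x : S) (p q : ℕ)
    (hq : 1 ≤ q) (hpq : q < p)
    (h : x * x = npowMul x p (spow (pinv x) (q - 1))) :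
    x * x = spow x (p - q - 1) * (x * pinv x) ∧
      x * x = spow (pinv (pinv x)) (p - q - 1) ∧
      IsGroupElement (x * x) := by
  have hp' : p = (p - q - 1) + (q - 1) + 1 + 1 := by omega
  rw [hp', npowMul_eq, ← spow_add, mul_assoc, spow_mul_spow_pinv] at h
  refine ⟨h, ?_, ?_⟩
  · rw [pinv_pinv_eq, spow_xw]; exact h
  · rw [h]; exact ⟨x * pinv x, subgroup_spow_w x (p - q - 1)⟩
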